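/- Under the abstract variational framework, let γ, γ' : X → ℝ be bounded measurable with γ ≥ 0 and γ' ≥ 0 μ-a.e., let ℓ : V → ℝ be a linear functional, and let u, u' ∈ V be weak solutions for (γ, ℓ) and (γ', ℓ) respectively. Then ∫_X (γ' − γ)·(Tu)² dμ ≥ ∫_X (γ' − γ)·(Tu')² dμ. (This is inequality (5.1) from step (a) of the proof of Theorem 5.2: with δ = γ' − γ, one has ∫_Γ δ |u_γ|² ds ≥ ∫_Γ δ |u_{γ+δ}|² ds.) -/

import Mathlib

open MeasureTheory

/-- Product of two `L²` functions is integrable. -/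
lemma integrable_mul_of_memL2 {X : Type*} [MeasurableSpace X] {μ : Measure X}
    {f g : X → ℝ} (hf : MemLp f 2 μ) (hg : MemLp g 2 μ) :
    Integrable (fun x => f x * g x) μ := by
  have h : MemLp (f • g) 1 μ :=
    hg.smul hf
  exact (memLp_one_iff_integrable.mp h).congr
    (ae_of_all _ fun x => by simp [Pi.smul_apply, smul_eq_mul])

/-- Inequality (5.1) from step (a) of the proof of Theorem 5.2: with `δ = γ' − γ`,
`∫_X (γ' − γ)(Tu)² dμ ≥ ∫_X (γ' − γ)(Tu')² dμ`. -/
theorem monotonicity_coefficient_swap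
    {V : Type*} [AddCommGroup V] [Module ℝ V]
    {X : Type*} [MeasurableSpace X] {μ : Measure X}
    (a : V → V → ℝ)
    (ha_symm : ∀ v w, a v w = a w v)
    (ha_add : ∀ u v w, a (u + v) w = a u w + a v w)
    (ha_smul : ∀ (c : ℝ) (v w : V), a (c • v) w = c * a v w)
    (ha_nonneg : ∀ v, 0 ≤ a v v)
    (T : V →ₗ[ℝ] (X → ℝ))
    (hT : ∀ v, MemLp (T v) 2 μ)
    (γ γ' : X → ℝ)
    (hγm : Measurable γ) (hγ'm : Measurable γ')
    (hγb : ∃ C, ∀ x, |γ x| ≤ C) (hγ'b : ∃ C, ∀ x, |γ' x| ≤ C)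
    (hγ0 : ∀ᵐ x ∂μ, 0 ≤ γ x)
    (hγ'0 : ∀ᵐ x ∂μ, 0 ≤ γ' x)
    (ℓ : V →ₗ[ℝ] ℝ)
    (u u' : V)
    (hu : ∀ w, a u w + ∫ x, γ x * T u x * T w x ∂μ = ℓ w)
    (hu' : ∀ w, a u' w + ∫ x, γ' x * T u' x * T w x ∂μ = ℓ w) :
    ∫ x, (γ' x - γ x) * (T u x) ^ 2 ∂μ ≥ ∫ x, (γ' x - γ x) * (T u' x) ^ 2 ∂μ := by
  -- integrability of products
  have hmul : ∀ v w : V, Integrable (fun x => T v x * T w x) μ := fun v w =>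
    integrable_mul_of_memL2 (hT v) (hT w)
  have hβ : ∀ (β : X → ℝ), Measurable β → (∃ C, ∀ x, |β x| ≤ C) →
      ∀ v w : V, Integrable (fun x => β x * T v x * T w x) μ := by
    rintro β hβm ⟨C, hC⟩ v w
    have h := (hmul v w).bdd_mul hβm.aestronglyMeasurable (c := C) (ae_of_all _ fun x => by
      simpa [Real.norm_eq_abs] using hC x)
    exact h.congr (ae_of_all _ fun x => by ring)
  have hγi : ∀ v w : V, Integrable (fun x => γ x * T v x * T w x) μ := hβ γ hγm hγb
  have hγ'i : ∀ v w : V, Integrable (fun x => γ' x * T v x * T w x) μ := hβ γ' hγ'm hγ'b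
  have hδi : ∀ v w : V, Integrable (fun x => (γ' x - γ x) * T v x * T w x) μ := by
    obtain ⟨C, hC⟩ := hγb; obtain ⟨C', hC'⟩ := hγ'b
    exact hβ (fun x => γ' x - γ x) (hγ'm.sub hγm)
      ⟨C' + C, fun x => (abs_sub (γ' x) (γ x)).trans (add_le_add (hC' x) (hC x))⟩
  set w0 : V := u - u' with hw0
  have hTw : ∀ x, T w0 x = T u x - T u' x := fun x => by
    rw [hw0, map_sub]; rfl
  -- bilinearity of a in first argument
  have hasub : a w0 w0 = a u w0 - a u' w0 := by
    have h1 : w0 = u + (-1 : ℝ) • u' := by rw [hw0]; module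
    rw [h1, ha_add, ha_smul]; ring
  -- the two weak formulations tested against w0
  have hA : a u w0 + ∫ x, γ x * T u x * T w0 x ∂μ
      = a u' w0 + ∫ x, γ' x * T u' x * T w0 x ∂μ := by
    rw [hu w0, hu' w0]
  -- expansions of integrals over T w0
  have e1 : ∫ x, γ' x * T w0 x * T w0 x ∂μ
      = (∫ x, γ' x * T u x * T w0 x ∂μ) - ∫ x, γ' x * T u' x * T w0 x ∂μ := by
    rw [← integral_sub (hγ'i u w0) (hγ'i u' w0)]
    refine integral_congr_ae (ae_of_all _ fun x => ?_)
    simp only [hTw]; ring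
  have e1' : ∫ x, γ x * T w0 x * T w0 x ∂μ
      = (∫ x, γ x * T u x * T w0 x ∂μ) - ∫ x, γ x * T u' x * T w0 x ∂μ := by
    rw [← integral_sub (hγi u w0) (hγi u' w0)]
    refine integral_congr_ae (ae_of_all _ fun x => ?_)
    simp only [hTw]; ring
  have e2 : ∫ x, (γ' x - γ x) * T u x * T w0 x ∂μ
      = (∫ x, γ' x * T u x * T w0 x ∂μ) - ∫ x, γ x * T u x * T w0 x ∂μ := by
    rw [← integral_sub (hγ'i u w0) (hγi u w0)]
    refine integral_congr_ae (ae_of_all _ fun x => ?_)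
    ring
  have e3 : ∫ x, (γ' x - γ x) * T u' x * T w0 x ∂μ
      = (∫ x, γ' x * T u' x * T w0 x ∂μ) - ∫ x, γ x * T u' x * T w0 x ∂μ := by
    rw [← integral_sub (hγ'i u' w0) (hγi u' w0)]
    refine integral_congr_ae (ae_of_all _ fun x => ?_)
    ring
  -- the two quadratic quantities are nonnegative
  have hQ1 : 0 ≤ a w0 w0 + ∫ x, γ' x * T w0 x * T w0 x ∂μ := by
    have : 0 ≤ ∫ x, γ' x * T w0 x * T w0 x ∂μ := by
      apply integral_nonneg_of_ae
      filter_upwards [hγ'0] with x hx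
      simp only [Pi.zero_apply]
      have := mul_self_nonneg (T w0 x)
      nlinarith
    linarith [ha_nonneg w0]
  have hQ2 : 0 ≤ a w0 w0 + ∫ x, γ x * T w0 x * T w0 x ∂μ := by
    have : 0 ≤ ∫ x, γ x * T w0 x * T w0 x ∂μ := by
      apply integral_nonneg_of_ae
      filter_upwards [hγ0] with x hx
      simp only [Pi.zero_apply]
      have := mul_self_nonneg (T w0 x)
      nlinarith
    linarith [ha_nonneg w0]
  -- integrability of the squared terms
  have hu2 : Integrable (fun x => (γ' x - γ x) * (T u x) ^ 2) μ :=
    (hδi u u).congr (ae_of_all _ fun x => by ring)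
  have hu'2 : Integrable (fun x => (γ' x - γ x) * (T u' x) ^ 2) μ :=
    (hδi u' u').congr (ae_of_all _ fun x => by ring)
  -- the goal difference equals the sum of the two quadratic quantities
  have key : (∫ x, (γ' x - γ x) * (T u x) ^ 2 ∂μ) - ∫ x, (γ' x - γ x) * (T u' x) ^ 2 ∂μ
      = (∫ x, (γ' x - γ x) * T u x * T w0 x ∂μ)
        + ∫ x, (γ' x - γ x) * T u' x * T w0 x ∂μ := by
    rw [← integral_sub hu2 hu'2, ← integral_add (hδi u w0) (hδi u' w0)]
    refine integral_congr_ae (ae_of_all _ fun x => ?_)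
    simp only [hTw]; ring
  linarith [hQ1, hQ2, hA, e1, e1', e2, e3, key, hasub]
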